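/- Let ρ satisfy ∫_u¹ ρ(v) dv = C_{α,θ} u^{-α}(1-u)^θ where C_{α,θ} = Γ(θ+2-α)/(Γ(1-α)Γ(1+θ)), with 0 ≤ α < 1, θ ≥ 0. Then the Lévy exponent φ(r) = ∫₀¹ r(1-u)^{r-1}(∫_u¹ ρ(v)dv) du equals r Γ(θ+r) Γ(θ+2-α) / (Γ(θ+1) Γ(θ-α+r+1)) for each positive integer r. -/

import Mathlib

open MeasureTheory Real Set

lemma real_beta (a b : ℝ) (ha : 0 < a) (hb : 0 < b) :
    ∫ x in Ioo (0:ℝ) 1, x ^ (a-1) * (1-x) ^ (b-1)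
      = Real.Gamma a * Real.Gamma b / Real.Gamma (a+b) := by
  have h := Complex.Gamma_mul_Gamma_eq_betaIntegral (s := a) (t := b)
    (by simpa using ha) (by simpa using hb)
  have hbeta : Complex.betaIntegral a b
      = ((∫ x in Ioo (0:ℝ) 1, x ^ (a-1) * (1-x) ^ (b-1) : ℝ) : ℂ) := by
    rw [Complex.betaIntegral]
    rw [intervalIntegral.integral_of_le (by norm_num : (0:ℝ) ≤ 1)]
    rw [MeasureTheory.integral_Ioc_eq_integral_Ioo]
    have hcast : ((∫ x in Ioo (0:ℝ) 1, x ^ (a-1) * (1-x) ^ (b-1) : ℝ) : ℂ)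
        = ∫ x in Ioo (0:ℝ) 1, ((x ^ (a-1) * (1-x) ^ (b-1) : ℝ) : ℂ) :=
      (integral_ofReal (𝕜 := ℂ)).symm
    rw [hcast]
    refine setIntegral_congr_fun measurableSet_Ioo ?_
    intro x hx
    show _ = _
    simp only [Complex.ofReal_mul]
    rw [Complex.ofReal_cpow hx.1.le,
      Complex.ofReal_cpow (by linarith [hx.2] : (0:ℝ) ≤ 1 - x)]
    push_cast
    ring_nf
  rw [hbeta] at h
  have hgpos : 0 < Real.Gamma (a+b) := Real.Gamma_pos_of_pos (by linarith)
  have := congrArg Complex.re h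
  simp only [← Complex.ofReal_add, Complex.Gamma_ofReal, ← Complex.ofReal_mul,
    Complex.ofReal_re] at this
  rw [this, mul_comm, mul_div_assoc, div_self hgpos.ne', mul_one]

theorem two_parameter_levy_exponent
    (α θ : ℝ) (hα0 : 0 ≤ α) (hα1 : α < 1) (hθ : 0 ≤ θ)
    (ρ : ℝ → ℝ) (hρmeas : Measurable ρ)
    (hρnn : ∀ u ∈ Ioo (0:ℝ) 1, 0 ≤ ρ u)
    (htail : ∀ u ∈ Ioo (0:ℝ) 1,
      ∫ v in Ioo u 1, ρ v
        = Real.Gamma (θ + 2 - α) / (Real.Gamma (1 - α) * Real.Gamma (1 + θ))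
            * u ^ (-α) * (1 - u) ^ θ) :
    ∀ r : ℕ, 1 ≤ r →
      ∫ u in Ioo (0:ℝ) 1, (r : ℝ) * (1 - u) ^ (r - 1) * ∫ v in Ioo u 1, ρ v
        = r * Real.Gamma (θ + r) * Real.Gamma (θ + 2 - α)
            / (Real.Gamma (θ + 1) * Real.Gamma (θ - α + r + 1)) := by
  intro r hr
  set C : ℝ := Real.Gamma (θ + 2 - α) / (Real.Gamma (1 - α) * Real.Gamma (1 + θ)) with hC
  have hrR : (1:ℝ) ≤ (r:ℝ) := by exact_mod_cast hr
  have hstep : ∫ u in Ioo (0:ℝ) 1, (r : ℝ) * (1 - u) ^ (r - 1) * ∫ v in Ioo u 1, ρ v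
      = ∫ u in Ioo (0:ℝ) 1,
          ((r : ℝ) * C) * (u ^ ((1 - α) - 1) * (1 - u) ^ ((θ + r) - 1)) := by
    refine setIntegral_congr_fun measurableSet_Ioo ?_
    intro u hu
    have hu1 : 0 < 1 - u := by linarith [hu.2]
    show (r : ℝ) * (1 - u) ^ (r - 1) * (∫ v in Ioo u 1, ρ v) = _
    rw [htail u hu]
    have hpow : ((1 - u) ^ (r - 1) : ℝ) * (1 - u) ^ θ = (1 - u) ^ ((θ + r) - 1) := by
      rw [← Real.rpow_natCast (1 - u) (r - 1), ← Real.rpow_add hu1]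
      congr 1
      have : ((r - 1 : ℕ) : ℝ) = (r : ℝ) - 1 := by
        have := Nat.cast_sub hr (R := ℝ)
        simpa using this
      rw [this]; ring
    have hexp : u ^ (-α) = u ^ ((1 - α) - 1) := by norm_num
    calc (r : ℝ) * (1 - u) ^ (r - 1) * (C * u ^ (-α) * (1 - u) ^ θ)
        = ((r : ℝ) * C) * (u ^ (-α) * ((1 - u) ^ (r - 1) * (1 - u) ^ θ)) := by ring
      _ = ((r : ℝ) * C) * (u ^ ((1 - α) - 1) * (1 - u) ^ ((θ + r) - 1)) := by
          rw [hpow, hexp]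
  rw [hstep, integral_const_mul,
    real_beta (1 - α) (θ + r) (by linarith) (by linarith)]
  have hg1 : Real.Gamma (1 - α) ≠ 0 := (Real.Gamma_pos_of_pos (by linarith)).ne'
  have hg2 : Real.Gamma (1 + θ) ≠ 0 := (Real.Gamma_pos_of_pos (by linarith)).ne'
  have hg3 : Real.Gamma ((1 - α) + (θ + r)) ≠ 0 :=
    (Real.Gamma_pos_of_pos (by linarith)).ne'
  rw [hC, show (1 - α) + (θ + (r:ℝ)) = θ - α + r + 1 by ring,
    show (1:ℝ) + θ = θ + 1 by ring]
  rw [show (1 - α) + (θ + (r:ℝ)) = θ - α + r + 1 by ring] at hg3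
  rw [show (1:ℝ) + θ = θ + 1 by ring] at hg2
  field_simp
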